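/- Let K : ℝ × ℝ → ℝ be continuously differentiable with ∂₁K(x,y) = −∂₁K(y,x) for all x, y. Fix x ∈ ℝ and assume: the functions y ↦ K(x,y)·K(y,x) and y ↦ ∂₁K(x,y)·∫_x^y K(x,t) dt are Lebesgue integrable on ℝ; ∫_ℝ K(x,y)·K(y,x) dy = K(x,x) (projection/reproducing property); K(y,x) → 0 as y → ±∞; and K(y,x)·∫_x^y K(x,t) dt → 0 as y → ±∞. Then ∫_ℝ det𝕂₄(x,y) dy = (1/2)·K(x,x). -/

import Mathlib

open MeasureTheory Filter

theorem stmt_10 (K : ℝ → ℝ → ℝ)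
    (hK : ContDiff ℝ 1 fun p : ℝ × ℝ => K p.1 p.2)
    (hskew : ∀ x y : ℝ, deriv (fun t => K t y) x = - deriv (fun t => K t x) y)
    (x : ℝ)
    (hint1 : Integrable fun y => K x y * K y x)
    (hint2 : Integrable fun y => deriv (fun t => K t y) x * ∫ t in x..y, K x t)
    (hproj : (∫ y : ℝ, K x y * K y x) = K x x)
    (hlim1 : Tendsto (fun y => K y x) atTop (nhds 0))
    (hlim1' : Tendsto (fun y => K y x) atBot (nhds 0))
    (hlim2 : Tendsto (fun y => K y x * ∫ t in x..y, K x t) atTop (nhds 0))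
    (hlim2' : Tendsto (fun y => K y x * ∫ t in x..y, K x t) atBot (nhds 0)) :
    (∫ y : ℝ, (1/4) * (K x y * K y x + deriv (fun t => K t y) x * ∫ t in x..y, K x t))
      = (1/2) * K x x := by
  set F : ℝ → ℝ := fun y => ∫ t in x..y, K x t with hF
  set G : ℝ → ℝ := fun y => K y x * F y with hGdef
  -- continuity of t ↦ K x t
  have hcont : Continuous fun t => K x t := by
    have h0 : Continuous fun t : ℝ => ((x, t) : ℝ × ℝ) := by fun_prop
    exact hK.continuous.comp h0
  -- differentiability of y ↦ K y x
  have hKd : Differentiable ℝ fun y => K y x := by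
    have h1 : Differentiable ℝ fun y : ℝ => ((y, x) : ℝ × ℝ) := by fun_prop
    exact (hK.differentiable one_ne_zero).comp h1
  have hFd : ∀ y, HasDerivAt F (K x y) y := fun y =>
    intervalIntegral.integral_hasDerivAt_right (hcont.intervalIntegrable x y)
      hcont.stronglyMeasurable.stronglyMeasurableAtFilter hcont.continuousAt
  set G' : ℝ → ℝ := fun y => deriv (fun t => K t x) y * F y + K y x * K x y with hG'def
  have hGderiv : ∀ y, HasDerivAt G (G' y) y := fun y =>
    ((hKd y).hasDerivAt).mul (hFd y)
  -- pointwise identity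
  have hpt : ∀ y, deriv (fun t => K t y) x * F y = K x y * K y x - G' y := by
    intro y
    rw [hskew x y, hG'def]
    ring
  have hFcont : Continuous F := by
    rw [continuous_iff_continuousAt]; exact fun y => (hFd y).continuousAt
  have hGcont : Continuous G := hKd.continuous.mul hFcont
  have hintG' : Integrable G' := by
    have h : Integrable fun y => K x y * K y x - deriv (fun t => K t y) x * F y :=
      hint1.sub hint2
    exact h.congr (ae_of_all _ fun y => by show K x y * K y x - deriv (fun t => K t y) x * F y = G' y; rw [hpt y]; ring)
  have hGx : G x = 0 := by simp [hGdef, hF]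
  have hIoi : ∫ y in Set.Ioi x, G' y = 0 - G x :=
    integral_Ioi_of_hasDerivAt_of_tendsto hGcont.continuousWithinAt
      (fun y _ => hGderiv y) hintG'.integrableOn hlim2
  have hIic : ∫ y in Set.Iic x, G' y = G x - 0 :=
    integral_Iic_of_hasDerivAt_of_tendsto hGcont.continuousWithinAt
      (fun y _ => hGderiv y) hintG'.integrableOn hlim2'
  have hintG'0 : ∫ y, G' y = 0 := by
    rw [← intervalIntegral.integral_Iic_add_Ioi hintG'.integrableOn hintG'.integrableOn, hIoi, hIic]
    ring
  have hB : (∫ y, deriv (fun t => K t y) x * F y) = K x x := by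
    have : (∫ y, deriv (fun t => K t y) x * F y)
        = ∫ y, (K x y * K y x - G' y) := by
      congr 1; funext y; exact hpt y
    rw [this, integral_sub hint1 hintG', hproj, hintG'0, sub_zero]
  have hsum : (∫ y : ℝ, (K x y * K y x + deriv (fun t => K t y) x * F y))
      = K x x + K x x := by
    rw [integral_add hint1 hint2, hproj, hB]
  calc (∫ y : ℝ, (1/4) * (K x y * K y x + deriv (fun t => K t y) x * F y))
      = (1/4) * ∫ y : ℝ, (K x y * K y x + deriv (fun t => K t y) x * F y) :=
        integral_const_mul _ _
    _ = (1/2) * K x x := by rw [hsum]; ring
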